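/- Fix integers r, s ≥ 1 and t ≥ 2, and let ρ ∈ Par_{r,s} be a t-core with a_i = a_i(ρ) for 0 ≤ i ≤ t−1. Then the number of partitions λ ∈ Par_{r,s} with core_t(λ) = ρ equals ∏_{i=0}^{t−1} C(n_i, a_i). -/

import Mathlib

open Finset

/-- Partitions in the `r × s` rectangle: weakly decreasing `r`-tuples with parts at most `s`. -/
def IsRectPartition (r s : ℕ) (lam : Fin r → ℕ) : Prop :=
  (∀ i j : Fin r, i ≤ j → lam j ≤ lam i) ∧ ∀ i, lam i ≤ s

/-- The beta-set `β(λ) = {λ_i + r − i : 1 ≤ i ≤ r}` (with 0-indexed `i`). -/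
def betaSet (r : ℕ) (lam : Fin r → ℕ) : Finset ℕ :=
  Finset.image (fun i : Fin r => lam i + (r - 1 - (i : ℕ))) Finset.univ

/-- `λ` is a `t`-core: for every `b ∈ β(λ)` with `b ≥ t`, also `b − t ∈ β(λ)`. -/
def IsTCore (r t : ℕ) (lam : Fin r → ℕ) : Prop :=
  ∀ b ∈ betaSet r lam, t ≤ b → b - t ∈ betaSet r lam

/-- `n_i = ⌊(r+s+t−1−i)/t⌋`. -/
def nres (r s t i : ℕ) : ℕ := (r + s + t - 1 - i) / t

/-- `a_i(λ) = #{b ∈ β(λ) : b ≡ i (mod t)}`. -/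
def aCount (r t : ℕ) (lam : Fin r → ℕ) (i : ℕ) : ℕ :=
  ((betaSet r lam).filter fun b => b % t = i).card

/-- The justification `J(λ)`: in each residue class `i` mod `t`, the `a_i(λ)` smallest
nonnegative integers congruent to `i`. -/
def justification (r t : ℕ) (lam : Fin r → ℕ) : Finset ℕ :=
  (Finset.range t).biUnion fun i =>
    (Finset.range (aCount r t lam i)).image fun m => i + m * t

/-- The size of the `t`-core of `λ`: `Σ_{b ∈ J(λ)} b − r(r−1)/2`. -/
def coreSize (r t : ℕ) (lam : Fin r → ℕ) : ℕ :=
  (∑ b ∈ justification r t lam, b) - r * (r - 1) / 2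

lemma dvd_iff_mod_eq {n t i : ℕ} (ht : 0 < t) (hi : i < t) :
    t ∣ (n + t - i) ↔ n % t = i := by
  rcases Nat.lt_or_ge n i with hni | hni
  · constructor
    · intro h
      have := Nat.le_of_dvd (by omega) h
      omega
    · intro h
      have : n % t = n := Nat.mod_eq_of_lt (by omega)
      omega
  · have he : n + t - i = (n - i) + t := by omega
    rw [he, Nat.dvd_add_self_right]
    constructor
    · rintro ⟨k, hk⟩
      have hn : n = i + t * k := by omega
      rw [hn, Nat.add_mul_mod_self_left, Nat.mod_eq_of_lt hi]
    · intro h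
      have : n = t * (n / t) + i := by
        conv_lhs => rw [← Nat.div_add_mod n t, h]
      exact ⟨n / t, by omega⟩

lemma card_filter_mod (N t i : ℕ) (ht : 0 < t) (hi : i < t) :
    ((range N).filter (fun b => b % t = i)).card = (N + t - 1 - i) / t := by
  induction N with
  | zero =>
    simp only [range_zero, filter_empty, card_empty]
    rw [eq_comm, Nat.div_eq_of_lt (by omega)]
  | succ n ih =>
    rw [range_add_one, filter_insert]
    have hstep : n + 1 + t - 1 - i = (n + t - 1 - i) + 1 := by omega
    have hsucc : n + t - 1 - i + 1 = n + t - i := by omega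
    by_cases h : n % t = i
    · rw [if_pos h, card_insert_of_notMem (by simp), ih, hstep, Nat.succ_div,
        if_pos (by rw [hsucc]; exact (dvd_iff_mod_eq ht hi).mpr h)]
    · rw [if_neg h, ih, hstep, Nat.succ_div,
        if_neg (by rw [hsucc]; exact fun hd => h ((dvd_iff_mod_eq ht hi).mp hd))]
      simp

lemma betaFun_strictAnti {r : ℕ} {lam : Fin r → ℕ}
    (hlam : ∀ i j : Fin r, i ≤ j → lam j ≤ lam i) :
    StrictAnti (fun i : Fin r => lam i + (r - 1 - (i : ℕ))) := by
  intro i j hij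
  have h1 : lam j ≤ lam i := hlam i j hij.le
  have h2 : (j : ℕ) < r := j.isLt
  have h3 : (i : ℕ) < (j : ℕ) := hij
  simp only
  omega

lemma betaSet_card {r : ℕ} {lam : Fin r → ℕ}
    (hlam : ∀ i j : Fin r, i ≤ j → lam j ≤ lam i) :
    (betaSet r lam).card = r := by
  rw [betaSet, Finset.card_image_of_injective _ (betaFun_strictAnti hlam).injective,
    card_univ, Fintype.card_fin]

lemma betaSet_subset_range {r s : ℕ} {lam : Fin r → ℕ} (hlam : ∀ i, lam i ≤ s) :
    betaSet r lam ⊆ range (r + s) := by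
  intro b hb
  rw [betaSet, mem_image] at hb
  obtain ⟨i, _, rfl⟩ := hb
  have := hlam i
  have := i.isLt
  rw [mem_range]
  omega

set_option maxHeartbeats 1000000 in
lemma betaSet_injOn {r : ℕ} (hr : 1 ≤ r) {lam mu : Fin r → ℕ}
    (hlam : ∀ i j : Fin r, i ≤ j → lam j ≤ lam i)
    (hmu : ∀ i j : Fin r, i ≤ j → mu j ≤ mu i)
    (h : betaSet r lam = betaSet r mu) : lam = mu := by
  have hcard : (betaSet r lam).card = r := betaSet_card hlam
  have key : ∀ (nu : Fin r → ℕ), (∀ i j : Fin r, i ≤ j → nu j ≤ nu i) →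
      betaSet r nu = betaSet r lam →
      (fun i : Fin r => nu ⟨r - 1 - (i : ℕ), by omega⟩ + (r - 1 - (r - 1 - (i : ℕ))))
        = ⇑((betaSet r lam).orderEmbOfFin hcard) := by
    intro nu hnu hnuB
    have hmono : StrictMono (fun i : Fin r =>
        nu ⟨r - 1 - (i : ℕ), by omega⟩ + (r - 1 - (r - 1 - (i : ℕ)))) := by
      intro a b hab
      have hlt : (⟨r - 1 - (b : ℕ), by omega⟩ : Fin r) < ⟨r - 1 - (a : ℕ), by omega⟩ := by
        have : (a : ℕ) < (b : ℕ) := hab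
        have := b.isLt
        simp only [Fin.mk_lt_mk]
        omega
      exact betaFun_strictAnti hnu hlt
    have hmem : ∀ x : Fin r, nu ⟨r - 1 - (x : ℕ), by omega⟩ + (r - 1 - (r - 1 - (x : ℕ)))
        ∈ betaSet r lam := by
      intro x
      have hx : nu ⟨r - 1 - (x : ℕ), by omega⟩ + (r - 1 - (r - 1 - (x : ℕ)))
          ∈ betaSet r nu :=
        mem_image.mpr ⟨⟨r - 1 - (x : ℕ), by omega⟩, mem_univ _, rfl⟩
      rwa [hnuB] at hx
    exact Finset.orderEmbOfFin_unique hcard hmem hmono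
  have hfe := (key lam hlam rfl).trans (key mu hmu h.symm).symm
  funext i
  have h1 := congrFun hfe ⟨r - 1 - (i : ℕ), by omega⟩
  simp only at h1
  have hii : r - 1 - (r - 1 - (i : ℕ)) = (i : ℕ) := by have := i.isLt; omega
  have hidx : (⟨r - 1 - (r - 1 - (i : ℕ)), by omega⟩ : Fin r) = i := Fin.ext (by simp [hii])
  rw [hidx, hii] at h1
  exact Nat.add_right_cancel h1

lemma strictMono_add_le {r : ℕ} {g : Fin r → ℕ} (hg : StrictMono g) :
    ∀ (d : ℕ) (a b : Fin r), (b : ℕ) = (a : ℕ) + d → g a + d ≤ g b := by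
  intro d
  induction d with
  | zero =>
    intro a b hb
    have hab : a = b := Fin.ext (by omega)
    rw [hab]
    omega
  | succ d ih =>
    intro a b hb
    have hbd : (a : ℕ) + d < r := by have := b.isLt; omega
    have h1 := ih a ⟨(a : ℕ) + d, hbd⟩ rfl
    have h2 : g ⟨(a : ℕ) + d, hbd⟩ < g b := by
      apply hg
      rw [Fin.lt_def]
      show (a : ℕ) + d < (b : ℕ)
      omega
    omega

lemma exists_rect {r s : ℕ} (hr : 1 ≤ r) (B : Finset ℕ) (hBsub : B ⊆ range (r + s))
    (hBcard : B.card = r) :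
    ∃ lam : Fin r → ℕ, IsRectPartition r s lam ∧ betaSet r lam = B := by
  obtain ⟨g, hgmono, hgB⟩ : ∃ g : Fin r → ℕ, StrictMono g ∧ Finset.image g univ = B := by
    refine ⟨fun j => B.orderEmbOfFin hBcard j, (B.orderEmbOfFin hBcard).strictMono, ?_⟩
    apply Finset.coe_injective
    rw [Finset.coe_image, Finset.coe_univ, Set.image_univ]
    exact Finset.range_orderEmbOfFin B hBcard
  have hgmem : ∀ j, g j ∈ B := fun j => hgB ▸ mem_image.mpr ⟨j, mem_univ _, rfl⟩
  have hglt : ∀ j, g j < r + s := fun j => mem_range.mp (hBsub (hgmem j))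
  have hlow : ∀ j : Fin r, (j : ℕ) ≤ g j := by
    intro j
    have := strictMono_add_le hgmono (j : ℕ) ⟨0, by omega⟩ j (by simp)
    omega
  have hhigh : ∀ j : Fin r, g j + (r - 1 - (j : ℕ)) ≤ g ⟨r - 1, by omega⟩ := by
    intro j
    exact strictMono_add_le hgmono (r - 1 - (j : ℕ)) j ⟨r - 1, by omega⟩
      (show r - 1 = (j : ℕ) + (r - 1 - (j : ℕ)) by have := j.isLt; omega)
  refine ⟨fun i => g ⟨r - 1 - (i : ℕ), by omega⟩ - (r - 1 - (i : ℕ)), ⟨?_, ?_⟩, ?_⟩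
  · intro i j hij
    have hvij : (i : ℕ) ≤ (j : ℕ) := hij
    have hlt := j.isLt
    show g ⟨r - 1 - (j : ℕ), by omega⟩ - (r - 1 - (j : ℕ)) ≤
      g ⟨r - 1 - (i : ℕ), by omega⟩ - (r - 1 - (i : ℕ))
    have h1 : g ⟨r - 1 - (j : ℕ), by omega⟩ + ((j : ℕ) - (i : ℕ)) ≤
        g ⟨r - 1 - (i : ℕ), by omega⟩ :=
      strictMono_add_le hgmono ((j : ℕ) - (i : ℕ)) _ _
        (show r - 1 - (i : ℕ) = r - 1 - (j : ℕ) + ((j : ℕ) - (i : ℕ)) by omega)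
    have h2 : r - 1 - (j : ℕ) ≤ g ⟨r - 1 - (j : ℕ), by omega⟩ := hlow ⟨r - 1 - (j : ℕ), by omega⟩
    omega
  · intro i
    have hlt := i.isLt
    show g ⟨r - 1 - (i : ℕ), by omega⟩ - (r - 1 - (i : ℕ)) ≤ s
    have h1 : g ⟨r - 1 - (i : ℕ), by omega⟩ + (r - 1 - (r - 1 - (i : ℕ))) ≤
        g ⟨r - 1, by omega⟩ := hhigh ⟨r - 1 - (i : ℕ), by omega⟩
    have h2 : g ⟨r - 1, by omega⟩ < r + s := hglt ⟨r - 1, by omega⟩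
    omega
  · refine Eq.trans ?_ hgB
    rw [betaSet]
    ext b
    simp only [mem_image, mem_univ, true_and]
    constructor
    · rintro ⟨i, rfl⟩
      have hlt := i.isLt
      refine ⟨⟨r - 1 - (i : ℕ), by omega⟩, ?_⟩
      have h2 : r - 1 - (i : ℕ) ≤ g ⟨r - 1 - (i : ℕ), by omega⟩ := hlow ⟨r - 1 - (i : ℕ), by omega⟩
      show g ⟨r - 1 - (i : ℕ), by omega⟩ =
        g ⟨r - 1 - (i : ℕ), by omega⟩ - (r - 1 - (i : ℕ)) + (r - 1 - (i : ℕ))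
      omega
    · rintro ⟨j, rfl⟩
      have hlt := j.isLt
      refine ⟨⟨r - 1 - (j : ℕ), by omega⟩, ?_⟩
      have hidx : (⟨r - 1 - (r - 1 - (j : ℕ)), by omega⟩ : Fin r) = j :=
        Fin.ext (show r - 1 - (r - 1 - (j : ℕ)) = (j : ℕ) by omega)
      show g ⟨r - 1 - (r - 1 - (j : ℕ)), by omega⟩ - (r - 1 - (r - 1 - (j : ℕ)))
        + (r - 1 - (r - 1 - (j : ℕ))) = g j
      rw [hidx]
      have h2 : (j : ℕ) ≤ g j := hlow _
      have h3 : r - 1 - (r - 1 - (j : ℕ)) = (j : ℕ) := by omega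
      rw [h3]
      omega

lemma just_filter {r t : ℕ} (lam : Fin r → ℕ) {j : ℕ} (hj : j < t) :
    (justification r t lam).filter (fun b => b % t = j) =
      (range (aCount r t lam j)).image (fun m => j + m * t) := by
  ext x
  simp only [justification, mem_filter, mem_biUnion, mem_range, mem_image]
  constructor
  · rintro ⟨⟨i, hi, m, hm, rfl⟩, hmod⟩
    rw [Nat.add_mul_mod_self_right, Nat.mod_eq_of_lt hi] at hmod
    subst hmod
    exact ⟨m, hm, rfl⟩
  · rintro ⟨m, hm, rfl⟩
    exact ⟨⟨j, hj, m, hm, rfl⟩, by rw [Nat.add_mul_mod_self_right, Nat.mod_eq_of_lt hj]⟩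

lemma just_filter_card {r t : ℕ} (lam : Fin r → ℕ) {j : ℕ} (ht : 1 ≤ t) (hj : j < t) :
    ((justification r t lam).filter (fun b => b % t = j)).card = aCount r t lam j := by
  rw [just_filter lam hj, Finset.card_image_of_injective _ ?_, card_range]
  intro a b hab
  simp only at hab
  have : a * t = b * t := by omega
  exact Nat.eq_of_mul_eq_mul_right (by omega) this

lemma justification_congr {r t : ℕ} {lam mu : Fin r → ℕ}
    (h : ∀ i < t, aCount r t lam i = aCount r t mu i) :
    justification r t lam = justification r t mu := by
  rw [justification, justification]
  exact Finset.biUnion_congr rfl fun i hi => by rw [h i (mem_range.mp hi)]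

lemma downward_eq_range (D : Finset ℕ) (h : ∀ m, m + 1 ∈ D → m ∈ D) :
    D = range D.card := by
  have hdc : ∀ d m, m + d ∈ D → m ∈ D := by
    intro d
    induction d with
    | zero => intro m hm; simpa using hm
    | succ d ih =>
      intro m hm
      exact ih m (h (m + d) (by rwa [show m + d + 1 = m + (d + 1) by omega]))
  have hmem : ∀ m, m ∈ D ↔ m < D.card := by
    intro m
    constructor
    · intro hm
      have hsub : range (m + 1) ⊆ D := by
        intro k hk
        rw [mem_range] at hk
        exact hdc (m - k) k (by rwa [show k + (m - k) = m by omega])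
      have := Finset.card_le_card hsub
      rw [card_range] at this
      omega
    · intro hm
      by_contra hmD
      have hsub : D ⊆ range m := by
        intro b hb
        rw [mem_range]
        by_contra hbm
        exact hmD (hdc (b - m) m (by rwa [show m + (b - m) = b by omega]))
      have := Finset.card_le_card hsub
      rw [card_range] at this
      omega
  ext m
  rw [mem_range]
  exact hmem m

lemma tcore_filter {r t : ℕ} {ρ : Fin r → ℕ} (ht : 1 ≤ t) (hcore : IsTCore r t ρ)
    {i : ℕ} (hi : i < t) :
    (betaSet r ρ).filter (fun b => b % t = i) =
      (range (aCount r t ρ i)).image (fun m => i + m * t) := by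
  set F := (betaSet r ρ).filter (fun b => b % t = i) with hF
  have hFmem : ∀ b ∈ F, b = i + b / t * t := by
    intro b hb
    have hmod : b % t = i := (mem_filter.mp hb).2
    have h1 := Nat.div_add_mod b t
    have h2 : b / t * t = t * (b / t) := Nat.mul_comm _ _
    omega
  have hinj : Set.InjOn (fun b => b / t) F := by
    intro a ha b hb hab
    simp only at hab
    rw [hFmem a ha, hFmem b hb, hab]
  set D := F.image (fun b => b / t) with hD
  have hDcard : D.card = aCount r t ρ i := by
    rw [hD, Finset.card_image_of_injOn hinj]
    rfl
  have hdown : ∀ m, m + 1 ∈ D → m ∈ D := by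
    intro m hm
    rw [hD, mem_image] at hm
    obtain ⟨b, hb, hbm⟩ := hm
    have hbe : b = i + (m + 1) * t := by
      have := hFmem b hb
      rw [hbm] at this
      exact this
    have hbF := mem_filter.mp hb
    have hbt : t ≤ b := by
      rw [hbe, Nat.succ_mul]
      omega
    have hsub := hcore b hbF.1 hbt
    have hbsub : b - t = i + m * t := by
      rw [hbe, Nat.succ_mul]
      omega
    have hsubmod : (b - t) % t = i := by
      rw [hbsub, Nat.add_mul_mod_self_right, Nat.mod_eq_of_lt hi]
    have hmemF : b - t ∈ F := mem_filter.mpr ⟨hsub, hsubmod⟩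
    rw [hD, mem_image]
    refine ⟨b - t, hmemF, ?_⟩
    rw [hbsub]
    rw [Nat.add_mul_div_right _ _ (show 0 < t by omega), Nat.div_eq_of_lt hi]
    omega
  have hDr : D = range (aCount r t ρ i) := by
    rw [downward_eq_range D hdown, hDcard]
  ext x
  rw [mem_image, ← hDr]
  constructor
  · intro hx
    exact ⟨x / t, mem_image.mpr ⟨x, hx, rfl⟩, (hFmem x hx).symm⟩
  · rintro ⟨m, hm, rfl⟩
    rw [hD, mem_image] at hm
    obtain ⟨b, hb, rfl⟩ := hm
    rwa [← hFmem b hb]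

lemma justification_eq_beta {r t : ℕ} {ρ : Fin r → ℕ} (ht : 1 ≤ t)
    (hcore : IsTCore r t ρ) : justification r t ρ = betaSet r ρ := by
  have hc : ∀ i ∈ range t, (range (aCount r t ρ i)).image (fun m => i + m * t) =
      (betaSet r ρ).filter (fun b => b % t = i) :=
    fun i hi => (tcore_filter ht hcore (mem_range.mp hi)).symm
  rw [justification, Finset.biUnion_congr rfl hc,
    Finset.biUnion_filter_eq_of_maps_to (fun b _ => mem_range.mpr (Nat.mod_lt b (by omega)))]

/-- For a `t`-core `ρ ∈ Par_{r,s}`, the number of partitions `λ ∈ Par_{r,s}`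
with `core_t(λ) = ρ` (i.e. `J(λ) = β(ρ)`) equals `∏_{i=0}^{t−1} C(n_i, a_i)`. -/
theorem count_fixed_core (r s t : ℕ) (hr : 1 ≤ r) (hs : 1 ≤ s) (ht : 2 ≤ t)
    (ρ : Fin r → ℕ) (hρ : IsRectPartition r s ρ) (hcore : IsTCore r t ρ) :
    {lam : Fin r → ℕ | IsRectPartition r s lam ∧
        justification r t lam = betaSet r ρ}.ncard =
      ∏ i ∈ Finset.range t, (nres r s t i).choose (aCount r t ρ i) := by
  classical
  have ht1 : 1 ≤ t := by omega
  have ht0 : 0 < t := by omega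
  set S : Finset (Finset ℕ) := ((range (r + s)).powerset).filter
      (fun B => ∀ i ∈ range t, (B.filter (fun b => b % t = i)).card = aCount r t ρ i) with hS
  have hbcard : (betaSet r ρ).card = r := betaSet_card hρ.1
  have hsum : ∑ i ∈ range t, aCount r t ρ i = r := by
    have h := Finset.card_eq_sum_card_fiberwise (f := fun b => b % t)
      (s := betaSet r ρ) (t := range t) (fun b _ => mem_range.mpr (Nat.mod_lt b ht0))
    rw [hbcard] at h
    exact h.symm
  have hbij : Set.BijOn (betaSet r) {lam | IsRectPartition r s lam ∧
      justification r t lam = betaSet r ρ} ↑S := by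
    refine ⟨?_, ?_, ?_⟩
    · rintro lam ⟨hrect, hjust⟩
      rw [Finset.mem_coe, hS, mem_filter, mem_powerset]
      refine ⟨betaSet_subset_range hrect.2, ?_⟩
      intro i hi
      have hi' := mem_range.mp hi
      have h1 : aCount r t lam i = aCount r t ρ i := by
        rw [← just_filter_card lam ht1 hi', hjust]
        rfl
      exact h1
    · rintro lam ⟨hlam1, _⟩ mu ⟨hmu1, _⟩ heq
      exact betaSet_injOn hr hlam1.1 hmu1.1 heq
    · rintro B hB
      rw [Finset.mem_coe, hS, mem_filter, mem_powerset] at hB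
      obtain ⟨hBsub, hBcounts⟩ := hB
      have hBcard : B.card = r := by
        rw [Finset.card_eq_sum_card_fiberwise (f := fun b => b % t) (t := range t)
          (fun b _ => mem_range.mpr (Nat.mod_lt b ht0))]
        rw [Finset.sum_congr rfl hBcounts]
        exact hsum
      obtain ⟨lam, hrect, hbeta⟩ := exists_rect hr B hBsub hBcard
      have hjust : justification r t lam = betaSet r ρ := by
        refine (justification_congr fun i hi => ?_).trans (justification_eq_beta ht1 hcore)
        show ((betaSet r lam).filter (fun b => b % t = i)).card = aCount r t ρ i
        rw [hbeta]
        exact hBcounts i (mem_range.mpr hi)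
      exact ⟨lam, ⟨hrect, hjust⟩, hbeta⟩
  have hcount : {lam | IsRectPartition r s lam ∧
      justification r t lam = betaSet r ρ}.ncard = S.card := by
    rw [← Set.ncard_coe_finset, ← hbij.image_eq, Set.ncard_image_of_injOn hbij.injOn]
  rw [hcount]
  -- Step 2: S.card = product
  set T := (range t).pi (fun i => Finset.powersetCard (aCount r t ρ i)
      ((range (r + s)).filter (fun b => b % t = i))) with hT
  have hfilterU : ∀ (p : ∀ i ∈ range t, Finset ℕ), p ∈ T → ∀ j (hj : j ∈ range t),
      ((range t).attach.biUnion fun x => p x.1 x.2).filter (fun b => b % t = j) = p j hj := by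
    intro p hp j hj
    rw [hT, Finset.mem_pi] at hp
    ext x
    simp only [mem_filter, mem_biUnion, mem_attach, true_and, Subtype.exists]
    constructor
    · rintro ⟨⟨i, hi, hxi⟩, hxj⟩
      have hpi := mem_powersetCard.mp (hp i hi)
      have := hpi.1 hxi
      rw [mem_filter] at this
      have : i = j := by rw [← this.2, hxj]
      subst this
      exact hxi
    · intro hx
      have hpj := mem_powersetCard.mp (hp j hj)
      have := hpj.1 hx
      rw [mem_filter] at this
      exact ⟨⟨j, hj, hx⟩, this.2⟩
  have hST : S.card = T.card := by
    refine Finset.card_bij' (fun B _ => fun i _ => B.filter (fun b => b % t = i))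
      (fun p hp => (range t).attach.biUnion fun x => p x.1 x.2) ?_ ?_ ?_ ?_
    · intro B hB
      rw [hS, mem_filter, mem_powerset] at hB
      rw [hT, Finset.mem_pi]
      intro i hi
      rw [mem_powersetCard]
      exact ⟨Finset.filter_subset_filter _ hB.1, hB.2 i hi⟩
    · intro p hp
      rw [hS, mem_filter, mem_powerset]
      constructor
      · intro x hx
        rw [mem_biUnion] at hx
        obtain ⟨⟨i, hi⟩, _, hxi⟩ := hx
        rw [hT, Finset.mem_pi] at hp
        have := (mem_powersetCard.mp (hp i hi)).1 hxi
        exact (Finset.filter_subset _ _) this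
      · intro i hi
        rw [hfilterU p hp i hi]
        rw [hT, Finset.mem_pi] at hp
        exact (mem_powersetCard.mp (hp i hi)).2
    · intro B hB
      ext b
      simp only [mem_biUnion, mem_attach, true_and, Subtype.exists, mem_filter]
      constructor
      · rintro ⟨i, hi, hb, _⟩
        exact hb
      · intro hb
        exact ⟨b % t, mem_range.mpr (Nat.mod_lt b ht0), hb, rfl⟩
    · intro p hp
      funext i hi
      exact hfilterU p hp i hi
  rw [hST, hT, Finset.card_pi]
  refine Finset.prod_congr rfl fun i hi => ?_
  rw [Finset.card_powersetCard, card_filter_mod (r + s) t i ht0 (mem_range.mp hi)]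
  rfl
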